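/- Let n ≥ 1 be an integer, let b be a C^{n+1} real-valued function on a neighborhood of 0 in ℝ with b(0) > 0, and let v₀, v₁, …, v_n be real numbers. Then there exist real numbers c₁, …, c_n and C such that Σ_{k=0}^{n−1} (v_k/(k−n))·ε^{k−n}·(b(ε)^{k−n} − 1) + v_n·log b(ε) − Σ_{j=1}^{n} c_j·ε^{−j} converges to C as ε → 0⁺. In particular this expression contains no log(1/ε) term, so the log-term coefficient 𝓔 = ∫_Σ v^{(n)} dv in the renormalized volume expansion is unchanged under conformal rescaling of the background metric. -/
import Mathlib


open Topology Filter

/-- Auxiliary Taylor-expansion lemma: if `g` is `C^{m+1}` on `[0, δ]`, then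
`g(ε)·ε^{−m}` differs from a sum of pure negative powers `Σ_{j<m} a_j ε^{−(j+1)}`
by a term converging as `ε → 0⁺`. -/
theorem aux14 (m : ℕ) (δ : ℝ) (hδ : 0 < δ) (g : ℝ → ℝ)
    (hg : ContDiffOn ℝ ((m : ℕ∞) + 1) g (Set.Icc 0 δ)) :
    ∃ (a : ℕ → ℝ) (L : ℝ),
      Filter.Tendsto (fun ε : ℝ =>
          g ε * ε ^ (-(m : ℤ)) - ∑ j ∈ Finset.range m, a j * ε ^ (-((j : ℤ) + 1)))
        (𝓝[>] 0) (𝓝 L) := by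
  obtain ⟨K, hK⟩ := exists_taylor_mean_remainder_bound hδ.le hg
  set t : ℕ → ℝ := fun i => (Nat.factorial i : ℝ)⁻¹ * iteratedDerivWithin i g (Set.Icc 0 δ) 0 with ht
  have hP : ∀ x : ℝ, taylorWithinEval g m (Set.Icc 0 δ) 0 x
      = ∑ i ∈ Finset.range (m + 1), t i * x ^ i := by
    intro x
    rw [taylor_within_apply]
    refine Finset.sum_congr rfl fun i _ => ?_
    simp only [ht, smul_eq_mul, sub_zero]
    ring
  refine ⟨fun j => t (m - 1 - j), t m, ?_⟩
  have key : ∀ ε ∈ Set.Ioi (0 : ℝ),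
      g ε * ε ^ (-(m : ℤ)) - ∑ j ∈ Finset.range m, t (m - 1 - j) * ε ^ (-((j : ℤ) + 1))
        = t m + (g ε - taylorWithinEval g m (Set.Icc 0 δ) 0 ε) * ε ^ (-(m : ℤ)) := by
    intro ε hε
    have hε0 : ε ≠ 0 := ne_of_gt hε
    have hre : ∑ j ∈ Finset.range m, t (m - 1 - j) * ε ^ (-((j : ℤ) + 1))
        = ∑ i ∈ Finset.range m, t i * ε ^ ((i : ℤ) - m) := by
      rw [← Finset.sum_range_reflect (fun i => t i * ε ^ ((i : ℤ) - m)) m]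
      refine Finset.sum_congr rfl fun j hj => ?_
      have hj' : j < m := Finset.mem_range.1 hj
      have hcast : ((m - 1 - j : ℕ) : ℤ) - m = -((j : ℤ) + 1) := by omega
      rw [hcast]
    have hPsum : taylorWithinEval g m (Set.Icc 0 δ) 0 ε * ε ^ (-(m : ℤ))
        = (∑ i ∈ Finset.range m, t i * ε ^ ((i : ℤ) - m)) + t m := by
      rw [hP, Finset.sum_range_succ, add_mul, Finset.sum_mul]
      congr 1
      · refine Finset.sum_congr rfl fun i _ => ?_
        rw [mul_assoc, ← zpow_natCast ε i, ← zpow_add₀ hε0]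
        norm_num [sub_eq_add_neg]
      · rw [mul_assoc, ← zpow_natCast ε m, ← zpow_add₀ hε0]
        simp
    rw [hre]
    rw [sub_mul]
    linarith [hPsum]
  have h1 : Filter.Tendsto
      (fun ε : ℝ => (g ε - taylorWithinEval g m (Set.Icc 0 δ) 0 ε) * ε ^ (-(m : ℤ)))
      (𝓝[>] 0) (𝓝 0) := by
    apply squeeze_zero_norm' (a := fun ε : ℝ => K * ε)
    · filter_upwards [Ioc_mem_nhdsGT_of_mem (Set.mem_Ico.2 ⟨le_refl (0 : ℝ), hδ⟩)]
      intro ε hε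
      have hε0 : (0 : ℝ) < ε := hε.1
      have hKε := hK ε ⟨hε0.le, hε.2⟩
      have hpow : (0 : ℝ) < ε ^ (-(m : ℤ)) := zpow_pos hε0 _
      have hmul : ε ^ (m + 1) * ε ^ (-(m : ℤ)) = ε := by
        rw [← zpow_natCast ε (m + 1), ← zpow_add₀ hε0.ne']
        have : ((m + 1 : ℕ) : ℤ) + -(m : ℤ) = 1 := by push_cast; ring
        rw [this, zpow_one]
      calc ‖(g ε - taylorWithinEval g m (Set.Icc 0 δ) 0 ε) * ε ^ (-(m : ℤ))‖
          = ‖g ε - taylorWithinEval g m (Set.Icc 0 δ) 0 ε‖ * ε ^ (-(m : ℤ)) := by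
            rw [norm_mul, Real.norm_eq_abs (ε ^ (-(m : ℤ))), abs_of_pos hpow]
        _ ≤ (K * (ε - 0) ^ (m + 1)) * ε ^ (-(m : ℤ)) := by
            apply mul_le_mul_of_nonneg_right hKε hpow.le
        _ = K * ε := by rw [sub_zero, mul_assoc, hmul]
    · have : Filter.Tendsto (fun ε : ℝ => K * ε) (𝓝 0) (𝓝 (K * 0)) :=
        (continuous_const.mul continuous_id).tendsto 0
      simpa using this.mono_left nhdsWithin_le_nhds
  have h2 : Filter.Tendsto
      (fun ε : ℝ => t m + (g ε - taylorWithinEval g m (Set.Icc 0 δ) 0 ε) * ε ^ (-(m : ℤ)))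
      (𝓝[>] 0) (𝓝 (t m)) := by
    simpa using tendsto_const_nhds.add h1
  refine h2.congr' ?_
  filter_upwards [self_mem_nhdsWithin] with ε hε
  exact (key ε hε).symm

/-- the pointwise core of the conformal invariance of the singular Yamabe
energy: for `b` of class `C^{n+1}` near 0 with `b(0) > 0`, the expression
`Σ_{k<n} (v_k/(k−n)) ε^{k−n}(b(ε)^{k−n} − 1) + v_n log b(ε)`
differs from a finite sum of pure powers `Σ_j c_j ε^{−j}` by a term converging
as `ε → 0⁺`; in particular it carries no `log(1/ε)` term. -/
theorem stmt14 (n : ℕ) (hn : 1 ≤ n) (b : ℝ → ℝ) (U : Set ℝ)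
    (hUo : IsOpen U) (hU0 : (0 : ℝ) ∈ U)
    (hb : ContDiffOn ℝ ((n : ℕ∞) + 1) b U) (hb0 : 0 < b 0)
    (v : ℕ → ℝ) :
    ∃ (c : Fin n → ℝ) (C : ℝ),
      Filter.Tendsto (fun ε : ℝ =>
          (∑ k : Fin n, (v k / ((k : ℝ) - n)) * ε ^ (((k : ℕ) : ℤ) - (n : ℤ))
              * ((b ε) ^ (((k : ℕ) : ℤ) - (n : ℤ)) - 1))
            + v n * Real.log (b ε)
            - ∑ j : Fin n, c j * ε ^ (-(((j : ℕ) : ℤ) + 1)))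
        (𝓝[>] 0) (𝓝 C) := by
  -- basic continuity facts
  have hcont : ContinuousAt b 0 := hb.continuousOn.continuousAt (hUo.mem_nhds hU0)
  -- choose a small interval where `b > 0`
  have hmem : U ∩ b ⁻¹' Set.Ioi 0 ∈ 𝓝 (0 : ℝ) :=
    Filter.inter_mem (hUo.mem_nhds hU0) (hcont.preimage_mem_nhds (Ioi_mem_nhds hb0))
  obtain ⟨δ₀, hδ₀, hball⟩ := Metric.mem_nhds_iff.1 hmem
  set δ : ℝ := δ₀ / 2 with hδdef
  have hδ : 0 < δ := by positivity
  have hsub : Set.Icc 0 δ ⊆ U ∩ b ⁻¹' Set.Ioi 0 := by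
    intro x hx
    apply hball
    rw [Metric.mem_ball, Real.dist_eq, sub_zero, abs_of_nonneg hx.1]
    have := hx.2
    simp only [hδdef] at this
    linarith
  have hbpos : ∀ x ∈ Set.Icc (0 : ℝ) δ, 0 < b x := fun x hx => (hsub hx).2
  have hbδ : ContDiffOn ℝ ((n : ℕ∞) + 1) b (Set.Icc 0 δ) :=
    hb.mono fun x hx => (hsub hx).1
  set w : Fin n → ℝ := fun k => v k / ((k : ℝ) - n) with hw
  -- smoothness of the building blocks
  have hcd : ∀ k : Fin n, ContDiffOn ℝ (((n - (k : ℕ) : ℕ) : ℕ∞) + 1)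
      (fun x => b x ^ (((k : ℕ) : ℤ) - (n : ℤ)) - 1) (Set.Icc 0 δ) := by
    intro k
    have h2 : ContDiffOn ℝ (((n - (k : ℕ) : ℕ) : ℕ∞) + 1)
        (fun x => (b x ^ (n - (k : ℕ)))⁻¹ - 1) (Set.Icc 0 δ) := by
      refine (((hbδ.of_le ?_).pow _).inv fun x hx => (pow_pos (hbpos x hx) _).ne').sub
        contDiffOn_const
      have h : (n - (k : ℕ)) + 1 ≤ n + 1 := by omega
      exact_mod_cast h
    refine h2.congr fun x hx => ?_
    have hkn : (((k : ℕ) : ℤ) - (n : ℤ)) = -(((n - (k : ℕ) : ℕ)) : ℤ) := by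
      have := k.isLt; omega
    rw [hkn, zpow_neg, zpow_natCast]
  choose a L haux using fun k : Fin n =>
    aux14 (n - (k : ℕ)) δ hδ (fun x => b x ^ (((k : ℕ) : ℤ) - (n : ℤ)) - 1) (hcd k)
  refine ⟨fun j => ∑ k : Fin n, if (j : ℕ) < n - (k : ℕ) then w k * a k (j : ℕ) else 0,
    (∑ k : Fin n, w k * L k) + v n * Real.log (b 0), ?_⟩
  -- the limit of the log part
  have hlog : Filter.Tendsto (fun ε : ℝ => v n * Real.log (b ε)) (𝓝[>] 0)
      (𝓝 (v n * Real.log (b 0))) := by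
    have h1 : ContinuousAt (fun x => Real.log (b x)) 0 :=
      (Real.continuousAt_log hb0.ne').comp hcont
    exact ((h1.tendsto.const_mul (v n)).mono_left nhdsWithin_le_nhds)
  -- the limit of the rearranged sum
  have hT : Filter.Tendsto (fun ε : ℝ =>
      (∑ k : Fin n, w k * ((b ε ^ (((k : ℕ) : ℤ) - (n : ℤ)) - 1) * ε ^ (-((n - (k : ℕ) : ℕ) : ℤ))
          - ∑ j ∈ Finset.range (n - (k : ℕ)), a k j * ε ^ (-((j : ℤ) + 1))))
        + v n * Real.log (b ε)) (𝓝[>] 0)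
      (𝓝 ((∑ k : Fin n, w k * L k) + v n * Real.log (b 0))) := by
    refine Filter.Tendsto.add ?_ hlog
    exact tendsto_finset_sum _ fun k _ => (haux k).const_mul (w k)
  refine hT.congr fun ε => ?_
  -- rearrangement identity
  have hswap : ∑ j : Fin n,
        (∑ k : Fin n, if (j : ℕ) < n - (k : ℕ) then w k * a k (j : ℕ) else 0)
          * ε ^ (-(((j : ℕ) : ℤ) + 1))
      = ∑ k : Fin n, w k * ∑ j ∈ Finset.range (n - (k : ℕ)), a k j * ε ^ (-((j : ℤ) + 1)) := by
    simp only [Finset.sum_mul, ite_mul, zero_mul]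
    rw [Finset.sum_comm]
    refine Finset.sum_congr rfl fun k _ => ?_
    rw [Finset.mul_sum]
    rw [Fin.sum_univ_eq_sum_range
      (fun j => if j < n - (k : ℕ) then w k * a k j * ε ^ (-((j : ℤ) + 1)) else 0) n]
    calc ∑ j ∈ Finset.range n,
          (if j < n - (k : ℕ) then w k * a k j * ε ^ (-((j : ℤ) + 1)) else 0)
        = ∑ j ∈ Finset.range (n - (k : ℕ)),
          (if j < n - (k : ℕ) then w k * a k j * ε ^ (-((j : ℤ) + 1)) else 0) :=
          (Finset.sum_subset (Finset.range_subset_range.2 (Nat.sub_le n k))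
            (fun x _ hx => if_neg (by simpa using hx))).symm
      _ = ∑ j ∈ Finset.range (n - (k : ℕ)), w k * (a k j * ε ^ (-((j : ℤ) + 1))) :=
          Finset.sum_congr rfl fun j hj => by
            rw [if_pos (Finset.mem_range.1 hj)]; ring
  have hexp : ∀ k : Fin n, ε ^ (-((n - (k : ℕ) : ℕ) : ℤ)) = ε ^ (((k : ℕ) : ℤ) - (n : ℤ)) := by
    intro k
    congr 1
    have := k.isLt; omega
  simp only [mul_sub, Finset.sum_sub_distrib]
  rw [hswap]
  have hterm : ∑ k : Fin n,
        w k * ((b ε ^ (((k : ℕ) : ℤ) - (n : ℤ)) - 1) * ε ^ (-((n - (k : ℕ) : ℕ) : ℤ)))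
      = ∑ k : Fin n, (v k / ((k : ℝ) - n)) * ε ^ (((k : ℕ) : ℤ) - (n : ℤ))
          * ((b ε) ^ (((k : ℕ) : ℤ) - (n : ℤ)) - 1) := by
    refine Finset.sum_congr rfl fun k _ => ?_
    rw [hexp k, hw]
    ring
  rw [hterm]
  have h3 : ∑ k : Fin n, (v k / ((k : ℝ) - n)) * ε ^ (((k : ℕ) : ℤ) - (n : ℤ))
        * ((b ε) ^ (((k : ℕ) : ℤ) - (n : ℤ)) - 1)
      = (∑ k : Fin n, (v k / ((k : ℝ) - n)) * ε ^ (((k : ℕ) : ℤ) - (n : ℤ))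
          * (b ε) ^ (((k : ℕ) : ℤ) - (n : ℤ)))
        - ∑ k : Fin n, (v k / ((k : ℝ) - n)) * ε ^ (((k : ℕ) : ℤ) - (n : ℤ)) * 1 := by
    rw [← Finset.sum_sub_distrib]
    exact Finset.sum_congr rfl fun k _ => by ring
  linarith [h3]
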